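/- arXiv:1412.8481 — 5 statements merged into one kernel-verified Lean document; each statement's English description precedes it below -/
import Mathlib

section
/- Let (Ω, μ) be a measure space and let B be a two-valued subset of M(Ω, μ). Then B is a subset of L_∞(Ω, μ), and B, equipped with the metric induced by the essential-supremum norm of L_∞(Ω, μ), is an ultrametric space; consequently B has strict p-negative type for all p ∈ (0, ∞). -/
open MeasureTheory ENNReal Filter
open scoped Classical

/-- A set `B` in `X`, equipped with the distance function `d`, has `p`-negative type:
for all finite collections of distinct points of `B` and real weights summing to zero,
`∑_{j,i} d(z_j, z_i)^p ζ_j ζ_i ≤ 0`. -/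
def HasNegativeType {X : Type*} (d : X → X → ℝ) (p : ℝ) (B : Set X) : Prop :=
  ∀ n : ℕ, 2 ≤ n → ∀ z : Fin n → X, Function.Injective z → (∀ k, z k ∈ B) →
    ∀ ζ : Fin n → ℝ, ∑ k, ζ k = 0 →
      ∑ j, ∑ i, d (z j) (z i) ^ p * (ζ j * ζ i) ≤ 0

/-- Strict `p`-negative type: `p`-negative type, with strict inequality whenever the
weight tuple `ζ` is nonzero. -/
def HasStrictNegativeType {X : Type*} (d : X → X → ℝ) (p : ℝ) (B : Set X) : Prop :=
  HasNegativeType d p B ∧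
    ∀ n : ℕ, 2 ≤ n → ∀ z : Fin n → X, Function.Injective z → (∀ k, z k ∈ B) →
      ∀ ζ : Fin n → ℝ, ∑ k, ζ k = 0 → ζ ≠ 0 →
        ∑ j, ∑ i, d (z j) (z i) ^ p * (ζ j * ζ i) < 0

/-- The `p`-simplex gap `γ_p(D)` of a signed `(s,t)`-simplex
`D = [x_j(m_j); y_i(n_i)]_{s,t}` with respect to the distance function `d`. -/
noncomputable def simplexGap {X : Type*} (d : X → X → ℝ) (p : ℝ) {s t : ℕ}
    (x : Fin s → X) (y : Fin t → X) (m : Fin s → ℝ) (n : Fin t → ℝ) : ℝ :=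
  (∑ j, ∑ i, m j * n i * d (x j) (y i) ^ p)
    - (∑ j₁, ∑ j₂, if j₁ < j₂ then m j₁ * m j₂ * d (x j₁) (x j₂) ^ p else 0)
    - (∑ i₁, ∑ i₂, if i₁ < i₂ then n i₁ * n i₂ * d (y i₁) (y i₂) ^ p else 0)

/-- A signed simplex is degenerate if for every point `z`, the repeating numbers
`m(z) = ∑_{j : x_j = z} m_j` and `n(z) = ∑_{i : y_i = z} n_i` coincide. -/
def SimplexDegenerate {X : Type*} {s t : ℕ}
    (x : Fin s → X) (y : Fin t → X) (m : Fin s → ℝ) (n : Fin t → ℝ) : Prop :=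
  ∀ z : X, (∑ j, if x j = z then m j else 0) = (∑ i, if y i = z then n i else 0)


/-- The distance on `L_p(Ω, μ)` induced by the `p`-(quasi-)norm:
`d(f, g) = ‖f − g‖_p = (∫ |f − g|^p dμ)^{1/p}`. -/
noncomputable def lpDist {Ω : Type*} [MeasurableSpace Ω] (p : ℝ) (μ : Measure Ω) (f g : Ω →ₘ[μ] ℝ) : ℝ :=
  (eLpNorm (⇑(f - g)) (ENNReal.ofReal p) μ).toReal

/-- A set of (a.e.-classes of) measurable functions is two-valued if it has more than one
element and the essential range of each member is a subset of `{0, 1}`. -/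
def TwoValued {Ω : Type*} [MeasurableSpace Ω] {μ : Measure Ω} (B : Set (Ω →ₘ[μ] ℝ)) : Prop :=
  B.Nontrivial ∧ ∀ f ∈ B, ∀ᵐ ω ∂μ, (f : Ω → ℝ) ω ∈ ({0, 1} : Set ℝ)

lemma twoValued_dist_aux {Ω : Type*} [MeasurableSpace Ω] {μ : Measure Ω}
    {f g : Ω →ₘ[μ] ℝ}
    (hf : ∀ᵐ ω ∂μ, (f : Ω → ℝ) ω ∈ ({0, 1} : Set ℝ))
    (hg : ∀ᵐ ω ∂μ, (g : Ω → ℝ) ω ∈ ({0, 1} : Set ℝ)) :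
    eLpNorm (⇑(f - g)) ∞ μ = if f = g then 0 else 1 := by
  have hsub : ⇑(f - g) =ᵐ[μ] ⇑f - ⇑g := AEEqFun.coeFn_sub f g
  have hvals : ∀ᵐ ω ∂μ, ‖(⇑(f - g)) ω‖ = 0 ∨ ‖(⇑(f - g)) ω‖ = 1 := by
    filter_upwards [hf, hg, hsub] with ω h1 h2 h3
    rw [h3]
    simp only [Set.mem_insert_iff, Set.mem_singleton_iff] at h1 h2
    rcases h1 with h1 | h1 <;> rcases h2 with h2 | h2 <;>
      simp [Pi.sub_apply, h1, h2]
  split_ifs with hfg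
  · subst hfg
    rw [sub_self]
    rw [eLpNorm_congr_ae (AEEqFun.coeFn_zero : ⇑(0 : Ω →ₘ[μ] ℝ) =ᵐ[μ] 0)]
    exact eLpNorm_zero
  · have hub : eLpNorm (⇑(f - g)) ∞ μ ≤ 1 := by
      have := eLpNorm_le_of_ae_bound (μ := μ) (p := ∞) (f := ⇑(f - g)) (C := 1)
        (by filter_upwards [hvals] with ω h; rcases h with h | h <;> simp [h])
      simpa using this
    have hlb : 1 ≤ eLpNorm (⇑(f - g)) ∞ μ := by
      by_contra hlt
      push_neg at hlt
      rw [eLpNorm_exponent_top] at hlt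
      have hz : ∀ᵐ ω ∂μ, (⇑(f - g)) ω = 0 := by
        filter_upwards [hvals, ae_le_eLpNormEssSup (f := ⇑(f - g)) (μ := μ)] with ω h1 h2
        rcases h1 with h1 | h1
        · simpa using h1
        · exfalso
          have : (1 : ℝ≥0∞) ≤ eLpNormEssSup (⇑(f - g)) μ := by
            refine le_trans ?_ h2
            have : ‖(⇑(f - g)) ω‖₊ = 1 := by
              ext; simp [h1]
            rw [enorm_eq_nnnorm, this]
            simp
          exact absurd (lt_of_le_of_lt this hlt) (lt_irrefl _)
      have : f - g = 0 := by
        ext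
        filter_upwards [hz, (AEEqFun.coeFn_zero : ⇑(0 : Ω →ₘ[μ] ℝ) =ᵐ[μ] 0)] with ω h1 h2
        rw [h1, h2]
        simp
      exact hfg (sub_eq_zero.mp this)
    exact le_antisymm hub hlb

/-- A two-valued set `B` of (classes of) measurable functions on `(Ω, μ)`
lies in `L_∞(Ω, μ)`; with the metric induced by the essential-supremum norm it is an
ultrametric space, and consequently it has strict `p`-negative type for all `p ∈ (0, ∞)`. -/
theorem twoValued_Linfty_ultrametric {Ω : Type*} [MeasurableSpace Ω]
    (μ : Measure Ω) (B : Set (Ω →ₘ[μ] ℝ)) (hB : TwoValued B) :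
    (∀ f ∈ B, MemLp (⇑f) ∞ μ) ∧
    (∀ f ∈ B, ∀ g ∈ B, ∀ h ∈ B,
      (eLpNorm (⇑(f - h)) ∞ μ).toReal ≤
        max (eLpNorm (⇑(f - g)) ∞ μ).toReal (eLpNorm (⇑(g - h)) ∞ μ).toReal) ∧
    (∀ p : ℝ, 0 < p →
      HasStrictNegativeType (fun f g : Ω →ₘ[μ] ℝ => (eLpNorm (⇑(f - g)) ∞ μ).toReal) p B) := by
  obtain ⟨-, hval⟩ := hB
  have hd : ∀ f ∈ B, ∀ g ∈ B,
      (eLpNorm (⇑(f - g)) ∞ μ).toReal = if f = g then 0 else 1 := by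
    intro f hf g hg
    rw [twoValued_dist_aux (hval f hf) (hval g hg)]
    split_ifs <;> simp
  refine ⟨?_, ?_, ?_⟩
  · intro f hf
    refine memLp_top_of_bound f.aestronglyMeasurable 1 ?_
    filter_upwards [hval f hf] with ω hω
    simp only [Set.mem_insert_iff, Set.mem_singleton_iff] at hω
    rcases hω with h | h <;> simp [h]
  · intro f hf g hg h hh
    rw [hd f hf h hh, hd f hf g hg, hd g hg h hh]
    split_ifs with h1 h2 h3 <;> simp_all
  · intro p hp
    have hsum : ∀ n : ℕ, ∀ z : Fin n → (Ω →ₘ[μ] ℝ), Function.Injective z →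
        (∀ k, z k ∈ B) → ∀ ζ : Fin n → ℝ, ∑ k, ζ k = 0 →
        ∑ j, ∑ i, (eLpNorm (⇑(z j - z i)) ∞ μ).toReal ^ p * (ζ j * ζ i)
          = - ∑ k, ζ k ^ 2 := by
      intro n z hz hzB ζ hζ
      have hterm : ∀ j i : Fin n,
          (eLpNorm (⇑(z j - z i)) ∞ μ).toReal ^ p * (ζ j * ζ i)
            = ζ j * ζ i - (if i = j then ζ j * ζ i else 0) := by
        intro j i
        rw [hd _ (hzB j) _ (hzB i)]
        by_cases hij : j = i
        · subst hij
          simp [Real.zero_rpow hp.ne']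
        · rw [if_neg (fun h => hij (hz h)), if_neg (fun h => hij h.symm)]
          simp [Real.one_rpow]
      calc ∑ j, ∑ i, (eLpNorm (⇑(z j - z i)) ∞ μ).toReal ^ p * (ζ j * ζ i)
          = ∑ j, ∑ i, (ζ j * ζ i - (if i = j then ζ j * ζ i else 0)) := by
            refine Finset.sum_congr rfl fun j _ => Finset.sum_congr rfl fun i _ => hterm j i
        _ = ∑ j, (ζ j * ∑ i, ζ i - ζ j * ζ j) := by
            refine Finset.sum_congr rfl fun j _ => ?_
            rw [Finset.sum_sub_distrib, ← Finset.mul_sum, Finset.sum_ite_eq']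
            simp
        _ = - ∑ k, ζ k ^ 2 := by
            rw [hζ]
            simp [Finset.sum_neg_distrib, sq]
    constructor
    · intro n hn z hz hzB ζ hζ
      rw [hsum n z hz hzB ζ hζ]
      simp only [neg_nonpos]
      exact Finset.sum_nonneg fun k _ => sq_nonneg _
    · intro n hn z hz hzB ζ hζ hζ0
      rw [hsum n z hz hzB ζ hζ]
      simp only [neg_neg_iff_pos, Left.neg_neg_iff]
      obtain ⟨k, hk⟩ := Function.ne_iff.mp hζ0
      exact Finset.sum_pos' (fun k _ => sq_nonneg _)
        ⟨k, Finset.mem_univ k, by have : ζ k ≠ 0 := hk; positivity⟩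
end

section
/- Suppose k, n ≥ 1. A subset B = {x_0, x_1, …, x_k} of the Hamming cube {0,1}^n ⊂ ℝ^n, equipped with the ℓ_1-metric d_1(x,y) = Σ_i |x_i − y_i|, is affinely independent (as a subset of the real vector space ℝ^n) if and only if (B, d_1) has strict 1-negative type. -/
open MeasureTheory ENNReal Filter
open scoped Classical

private lemma cube_sq' {a b : ℝ} (ha : a ∈ ({0,1} : Set ℝ)) (hb : b ∈ ({0,1} : Set ℝ)) :
    |a - b| = (a - b)^2 := by
  simp only [Set.mem_insert_iff, Set.mem_singleton_iff] at ha hb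
  rcases ha with rfl | rfl <;> rcases hb with rfl | rfl <;> norm_num

private lemma quad_one' {m : ℕ} (a ζ : Fin m → ℝ) (h : ∑ k, ζ k = 0) :
    ∑ j, ∑ i, (a j - a i)^2 * (ζ j * ζ i) = -2 * (∑ k, ζ k * a k)^2 := by
  have e1 : (∑ k, ζ k * a k) * (∑ k, ζ k * a k)
      = ∑ j, ∑ i, (ζ j * a j) * (ζ i * a i) := Finset.sum_mul_sum _ _ _ _
  have e2 : (∑ j, (a j)^2 * ζ j) * (∑ i, ζ i)
      = ∑ j, ∑ i, ((a j)^2 * ζ j) * ζ i := Finset.sum_mul_sum _ _ _ _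
  have e3 : (∑ j, ζ j) * (∑ i, (a i)^2 * ζ i)
      = ∑ j, ∑ i, ζ j * ((a i)^2 * ζ i) := Finset.sum_mul_sum _ _ _ _
  calc ∑ j, ∑ i, (a j - a i)^2 * (ζ j * ζ i)
      = ∑ j, ∑ i, (((a j)^2 * ζ j) * ζ i + ζ j * ((a i)^2 * ζ i)
          - 2 * ((ζ j * a j) * (ζ i * a i))) :=
        Finset.sum_congr rfl fun j _ => Finset.sum_congr rfl fun i _ => by ring
    _ = (∑ j, ∑ i, ((a j)^2 * ζ j) * ζ i) + (∑ j, ∑ i, ζ j * ((a i)^2 * ζ i))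
          - 2 * (∑ j, ∑ i, (ζ j * a j) * (ζ i * a i)) := by
        simp only [Finset.sum_sub_distrib, Finset.sum_add_distrib, Finset.mul_sum]
    _ = -2 * (∑ k, ζ k * a k)^2 := by
        rw [← e1, ← e2, ← e3, h]; ring

private lemma main_id' {m n : ℕ} (z : Fin m → Fin n → ℝ)
    (hc : ∀ k i, z k i ∈ ({0,1} : Set ℝ)) (ζ : Fin m → ℝ) (h : ∑ k, ζ k = 0) :
    ∑ j, ∑ i, (∑ t, |z j t - z i t|) ^ (1:ℝ) * (ζ j * ζ i)
      = -2 * ∑ t, (∑ k, ζ k * z k t)^2 := by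
  have hd : ∀ j i : Fin m, (∑ t, |z j t - z i t|) ^ (1:ℝ) * (ζ j * ζ i)
      = ∑ t, (z j t - z i t)^2 * (ζ j * ζ i) := by
    intro j i
    rw [Real.rpow_one, Finset.sum_mul]
    exact Finset.sum_congr rfl fun t _ => by rw [cube_sq' (hc j t) (hc i t)]
  simp only [hd]
  have step1 : ∀ j : Fin m, ∑ i, ∑ t, (z j t - z i t)^2 * (ζ j * ζ i)
      = ∑ t, ∑ i, (z j t - z i t)^2 * (ζ j * ζ i) := fun j => Finset.sum_comm
  simp only [step1]
  rw [Finset.sum_comm, Finset.mul_sum]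
  exact Finset.sum_congr rfl fun t _ => quad_one' (fun k => z k t) ζ h

/-- **Murugan's theorem.** For `k, n ≥ 1`, a subset
`B = {x_0, …, x_k}` of the Hamming cube `{0,1}ⁿ ⊂ ℝⁿ` (with the `ℓ₁`-metric
`d₁(a,b) = ∑ᵢ |aᵢ − bᵢ|`) is affinely independent if and only if it has strict
`1`-negative type. -/
theorem hammingCube_affineIndependent_iff_strictNegativeType (k n : ℕ) (hk : 1 ≤ k)
    (hn : 1 ≤ n) (x : Fin (k + 1) → (Fin n → ℝ)) (hinj : Function.Injective x)
    (hcube : ∀ j, ∀ i, x j i ∈ ({0, 1} : Set ℝ)) :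
    AffineIndependent ℝ x ↔
      HasStrictNegativeType (fun a b : Fin n → ℝ => ∑ i, |a i - b i|) 1 (Set.range x) := by
  constructor
  · intro haff
    have neg : HasNegativeType (fun a b : Fin n → ℝ => ∑ i, |a i - b i|) 1 (Set.range x) := by
      intro m hm z hzinj hzmem ζ hζ
      have hc : ∀ p i, z p i ∈ ({0,1} : Set ℝ) := by
        intro p i
        obtain ⟨j, hj⟩ := hzmem p
        rw [← hj]; exact hcube j i
      rw [main_id' z hc ζ hζ]
      have h0 : 0 ≤ ∑ t, (∑ p, ζ p * z p t)^2 := Finset.sum_nonneg fun t _ => sq_nonneg _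
      nlinarith
    refine ⟨neg, ?_⟩
    intro m hm z hzinj hzmem ζ hζ hζ0
    have hc : ∀ p i, z p i ∈ ({0,1} : Set ℝ) := by
      intro p i
      obtain ⟨j, hj⟩ := hzmem p
      rw [← hj]; exact hcube j i
    rw [main_id' z hc ζ hζ]
    choose g hg using hzmem
    have hginj : Function.Injective g := fun a b hab => hzinj (by rw [← hg a, ← hg b, hab])
    have haff' : AffineIndependent ℝ (x ∘ g) :=
      haff.comp_embedding ⟨g, hginj⟩
    have key : 0 < ∑ t, (∑ p, ζ p * z p t)^2 := by
      rcases lt_or_eq_of_le (Finset.sum_nonneg fun t _ => sq_nonneg (∑ p, ζ p * z p t)) with h | h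
      · exact h
      · exfalso
        apply hζ0
        have hz : ∀ t, ∑ p, ζ p * z p t = 0 := by
          intro t
          have := (Finset.sum_eq_zero_iff_of_nonneg
            (fun t _ => sq_nonneg (∑ p, ζ p * z p t))).mp h.symm t (Finset.mem_univ t)
          exact pow_eq_zero_iff (by norm_num) |>.mp this
        have hw := affineIndependent_iff.mp haff' Finset.univ ζ hζ ?_
        · funext p
          exact hw p (Finset.mem_univ p)
        · funext t
          simp only [Finset.sum_apply, Pi.smul_apply, Function.comp_apply, smul_eq_mul,
            Pi.zero_apply]
          rw [← hz t]
          exact Finset.sum_congr rfl fun p _ => by rw [hg p]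
    nlinarith
  · intro hstrict
    rw [affineIndependent_iff]
    intro s w hw0 hwsum e he
    by_contra hne
    set ζ : Fin (k+1) → ℝ := fun j => if j ∈ s then w j else 0 with hζdef
    have h1 : ∑ j, ζ j = 0 := by
      rw [hζdef]
      simp only [Finset.sum_ite_mem, Finset.univ_inter]
      exact hw0
    have hζ0 : ζ ≠ 0 := by
      intro h
      apply hne
      have := congrFun h e
      simpa [hζdef, he] using this
    have hlt := hstrict.2 (k+1) (by omega) x hinj (fun j => Set.mem_range_self j) ζ h1 hζ0
    rw [main_id' x hcube ζ h1] at hlt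
    have hz : ∀ t, ∑ j, ζ j * x j t = 0 := by
      intro t
      have h2 := congrFun hwsum t
      simp only [Finset.sum_apply, Pi.smul_apply, smul_eq_mul, Pi.zero_apply] at h2
      calc ∑ j, ζ j * x j t = ∑ j ∈ s, w j * x j t := by
            rw [← Finset.univ_inter s, ← Finset.sum_ite_mem]
            exact Finset.sum_congr rfl fun j _ => by simp [hζdef, ite_mul]
        _ = 0 := h2
    simp only [hz] at hlt
    norm_num at hlt
end

section
/- Let X be a real inner product space and let Z be a non-empty subset of X with |Z| > 1 (so that the inherited metric space is defined). Then Z, with the metric induced by the inner product norm, has strict 2-negative type if and only if Z is an affinely independent subset of X. -/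
open MeasureTheory ENNReal Filter
open scoped Classical

private lemma key_sum {X : Type*} [NormedAddCommGroup X] [InnerProductSpace ℝ X]
    {n : ℕ} (z : Fin n → X) (ζ : Fin n → ℝ) (hζ : ∑ k, ζ k = 0) :
    ∑ j, ∑ i, dist (z j) (z i) ^ (2:ℝ) * (ζ j * ζ i)
      = -2 * ‖∑ k, ζ k • z k‖ ^ 2 := by
  have hd : ∀ a b : X, dist a b ^ (2:ℝ)
      = ‖a‖^2 - 2 * (inner ℝ a b : ℝ) + ‖b‖^2 := by
    intro a b
    rw [Real.rpow_two, dist_eq_norm, norm_sub_sq_real]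
  have hinner : ‖∑ k, ζ k • z k‖ ^ 2
      = ∑ j, ∑ i, ζ j * ζ i * (inner ℝ (z j) (z i) : ℝ) := by
    rw [← real_inner_self_eq_norm_sq, sum_inner]
    refine Finset.sum_congr rfl fun j _ => ?_
    rw [inner_sum]
    refine Finset.sum_congr rfl fun i _ => ?_
    rw [real_inner_smul_left, real_inner_smul_right]; ring
  have expand : ∀ j : Fin n,
      ∑ i, ((‖z j‖^2 * ζ j) * ζ i + ζ j * (‖z i‖^2 * ζ i)
        - 2 * (ζ j * ζ i * (inner ℝ (z j) (z i) : ℝ)))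
      = ζ j * (∑ i, ‖z i‖^2 * ζ i)
          - 2 * ∑ i, (ζ j * ζ i * (inner ℝ (z j) (z i) : ℝ)) := by
    intro j
    rw [Finset.sum_sub_distrib, Finset.sum_add_distrib, ← Finset.mul_sum,
      ← Finset.mul_sum, ← Finset.mul_sum, hζ, mul_zero, zero_add]
  calc ∑ j, ∑ i, dist (z j) (z i) ^ (2:ℝ) * (ζ j * ζ i)
      = ∑ j, ∑ i, ((‖z j‖^2 * ζ j) * ζ i + ζ j * (‖z i‖^2 * ζ i)
          - 2 * (ζ j * ζ i * (inner ℝ (z j) (z i) : ℝ))) := by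
        refine Finset.sum_congr rfl fun j _ => Finset.sum_congr rfl fun i _ => ?_
        rw [hd]; ring
    _ = ∑ j, (ζ j * (∑ i, ‖z i‖^2 * ζ i)
          - 2 * ∑ i, (ζ j * ζ i * (inner ℝ (z j) (z i) : ℝ))) :=
        Finset.sum_congr rfl fun j _ => expand j
    _ = -2 * ‖∑ k, ζ k • z k‖ ^ 2 := by
        rw [Finset.sum_sub_distrib, ← Finset.sum_mul, hζ, zero_mul, zero_sub,
          ← Finset.mul_sum, hinner]
        ring

/-- A subset `Z` (with more than one point) of a real inner product
space has strict `2`-negative type, with the metric induced by the inner-product norm,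
if and only if `Z` is affinely independent. -/
theorem innerProductSpace_strictNegativeType_iff_affineIndependent
    {X : Type*} [NormedAddCommGroup X] [InnerProductSpace ℝ X]
    (Z : Set X) (hZ : Z.Nontrivial) :
    HasStrictNegativeType (fun a b : X => dist a b) 2 Z ↔
      AffineIndependent ℝ ((↑) : Z → X) := by
  constructor
  · intro h
    intro s w hw hvs i hi
    by_contra hwi
    have hcard : 2 ≤ s.card := by
      rcases Nat.lt_or_ge s.card 2 with hc | hc
      · exfalso
        have h1 : s.card = 1 :=
          le_antisymm (by omega) (Finset.one_le_card.mpr ⟨i, hi⟩)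
        obtain ⟨a, ha⟩ := Finset.card_eq_one.mp h1
        subst ha
        rw [Finset.mem_singleton] at hi
        subst hi
        rw [Finset.sum_singleton] at hw
        exact hwi hw
      · exact hc
    set n := s.card with hn
    set e : Fin n ≃ s := s.equivFin.symm with he
    set z : Fin n → X := fun k => ((e k : Z) : X) with hzdef
    set ζ : Fin n → ℝ := fun k => w (e k) with hζdef
    have hinj : Function.Injective z := by
      intro a b hab
      exact e.injective (Subtype.val_injective (Subtype.val_injective hab))
    have hmem : ∀ k, z k ∈ Z := fun k => ((e k : Z)).2
    have hsum : ∑ k, ζ k = 0 := by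
      rw [hζdef]
      rw [Equiv.sum_comp e (fun a : s => w a), Finset.sum_coe_sort s (fun a => w a)]
      exact hw
    have hvsum : ∑ k, ζ k • z k = 0 := by
      rw [hζdef, hzdef]
      rw [Equiv.sum_comp e (fun a : s => w a • ((a : Z) : X)),
        Finset.sum_coe_sort s (fun a => w a • ((a : Z) : X))]
      rw [← Finset.weightedVSub_eq_linear_combination s hw]
      exact hvs
    have hne : ζ ≠ 0 := by
      intro h0
      apply hwi
      have := congrFun h0 (e.symm ⟨i, hi⟩)
      simpa [hζdef] using this
    have hlt := h.2 n hcard z hinj hmem ζ hsum hne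
    rw [show (fun a b : X => dist a b) = dist from rfl] at hlt
    rw [key_sum z ζ hsum, hvsum] at hlt
    simp at hlt
  · intro h
    constructor
    · intro n hn z hinj hmem ζ hsum
      have := key_sum z ζ hsum
      simp only at this ⊢
      rw [this]
      nlinarith [sq_nonneg ‖∑ k, ζ k • z k‖]
    · intro n hn z hinj hmem ζ hsum hne
      have hkey := key_sum z ζ hsum
      simp only at hkey ⊢
      rw [hkey]
      have hz : ∑ k, ζ k • z k ≠ 0 := by
        intro h0
        apply hne
        have hemb : Function.Injective (fun k : Fin n => (⟨z k, hmem k⟩ : Z)) := by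
          intro a b hab
          exact hinj (congrArg Subtype.val hab)
        have hind : AffineIndependent ℝ
            (((↑) : Z → X) ∘ fun k : Fin n => (⟨z k, hmem k⟩ : Z)) :=
          h.comp_embedding ⟨fun k => ⟨z k, hmem k⟩, hemb⟩
        have hind' : AffineIndependent ℝ z := hind
        have hvs : Finset.univ.weightedVSub z ζ = 0 := by
          rw [Finset.weightedVSub_eq_linear_combination Finset.univ hsum]
          exact h0
        have := hind' Finset.univ ζ hsum hvs
        funext k
        exact this k (Finset.mem_univ k)
      have hpos : 0 < ‖∑ k, ζ k • z k‖ ^ 2 :=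
        pow_pos (norm_pos_iff.mpr hz) 2
      linarith
end

section
/- Let (X, d) be a metric space containing distinct points x, y, z such that d(x, z) = d(z, y) = d(x, y)/2 (i.e., z is a metric midpoint of x and y). Then (X, d) does not have q-negative type for any q > 2. -/
open MeasureTheory ENNReal Filter
open scoped Classical

/-- A metric space containing a metric midpoint configuration (distinct
points `x, y, z` with `d(x,z) = d(z,y) = d(x,y)/2`) does not have `q`-negative type for
any `q > 2`. -/
theorem midpoint_no_negativeType {X : Type*} [MetricSpace X] (x y z : X)
    (hxy : x ≠ y) (hxz : x ≠ z) (hyz : y ≠ z)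
    (h1 : dist x z = dist x y / 2) (h2 : dist z y = dist x y / 2) :
    ∀ q : ℝ, 2 < q → ¬ HasNegativeType (fun a b : X => dist a b) q Set.univ := by
  intro q hq hneg
  have hD : 0 < dist x y := dist_pos.mpr hxy
  have key := hneg 3 (by norm_num) ![x, y, z]
    (by
      intro a b hab
      fin_cases a <;> fin_cases b <;> simp_all <;>
        first | rfl | (exact absurd hab (by simp_all)))
    (fun k => Set.mem_univ _) ![1, 1, -2] (by norm_num [Fin.sum_univ_three, Matrix.cons_val_two])
  rw [Fin.sum_univ_three] at key
  simp only [Fin.sum_univ_three, Matrix.cons_val_zero, Matrix.cons_val_one,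
    Matrix.head_cons, Matrix.cons_val_two, Matrix.tail_cons] at key
  simp only [dist_self, dist_comm y x, dist_comm z x, dist_comm y z] at key
  rw [h1, h2] at key
  have hzero : (0:ℝ) ^ q = 0 := by
    rw [Real.zero_rpow (by linarith)]
  rw [hzero] at key
  have hhalf : (dist x y / 2) ^ q = dist x y ^ q / 2 ^ q := by
    rw [Real.div_rpow (le_of_lt hD) (by norm_num)]
  rw [hhalf] at key
  have h2q : (2:ℝ) ^ (2:ℝ) < 2 ^ q := by
    exact Real.rpow_lt_rpow_left_iff (by norm_num) |>.mpr hq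
  have h4 : (4:ℝ) < 2 ^ q := by
    rw [show (4:ℝ) = 2 ^ (2:ℝ) by rw [show (2:ℝ) = ((2:ℕ):ℝ) by norm_num, Real.rpow_natCast]; norm_num]
    exact h2q
  have hDq : 0 < dist x y ^ q := Real.rpow_pos_of_pos hD q
  have h2qpos : (0:ℝ) < 2 ^ q := Real.rpow_pos_of_pos (by norm_num) q
  rw [div_eq_mul_inv] at key
  have hinv : (2:ℝ)^q * ((2:ℝ)^q)⁻¹ = 1 := mul_inv_cancel₀ (ne_of_gt h2qpos)
  nlinarith [mul_pos hDq h2qpos, mul_le_mul_of_nonneg_right key h2qpos.le]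
end

section
/- Let 0 < p < 2 and consider the four points z_0 = (0,0), z_1 = (1,1), z_2 = (2,1), z_3 = (2,0) in ℝ² equipped with the metric d_p induced by the p-norm (the p-quasi-norm when 0 < p < 1). Then the set Z = {z_0, z_1, z_2, z_3} is affinely dependent in ℝ², yet (Z, d_p) has strict p-negative type. -/
open MeasureTheory ENNReal Filter
open scoped Classical

/-- The metric on `ℝⁿ` induced by the `p`-norm: `d_p(x,y) = (∑ |x_k − y_k|^p)^{1/p}` for
`p ≥ 1`, and the `p`-quasi-norm metric `d_p(x,y) = ∑ |x_k − y_k|^p` for `0 < p < 1`. -/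
noncomputable def dpDist (p : ℝ) {n : ℕ} (x y : Fin n → ℝ) : ℝ :=
  if 1 ≤ p then (∑ k, |x k - y k| ^ p) ^ (1 / p) else ∑ k, |x k - y k| ^ p

/-! ### Auxiliary lemmas -/

private lemma sq_pos' {a : ℝ} (h : a ≠ 0) : 0 < a ^ 2 := by
  rcases h.lt_or_gt with h | h <;> nlinarith

/-- Positivity of the parametric quadratic form arising from the four-point example. -/
private lemma quad_pos (u w t a b c : ℝ) (hw : 0 < w) (hu : 0 < 4*u - w) (ht : t ≤ 0)
    (hwt : 0 < w + t) (hd : 0 < 4*u - u^2 - w)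
    (h : a ≠ 0 ∨ b ≠ 0 ∨ c ≠ 0) :
    0 < w*a^2 + u*b^2 + c^2 + w*a*b + u*b*c - t*a*c := by
  have hu0 : 0 < u := by nlinarith
  have hM : 0 < 4*u*w - w^2 := by nlinarith
  have hdet : 0 < 4*u*w - u*t^2 - w^2 - u^2*w - u*w*t := by
    nlinarith [mul_pos hw hd, mul_nonneg (mul_nonneg hu0.le (neg_nonneg.2 ht)) hwt.le]
  have key : 16*w*(4*u*w - w^2) * (w*a^2 + u*b^2 + c^2 + w*a*b + u*b*c - t*a*c)
      = (4*u*w - w^2)*4*(2*w*a + w*b - t*c)^2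
        + (2*(4*u*w - w^2)*b + (4*u*w + 2*w*t)*c)^2
        + 16*w*(4*u*w - u*t^2 - w^2 - u^2*w - u*w*t)*c^2 := by ring
  have hMpos : 0 < 16*w*(4*u*w - w^2) := by positivity
  have hMG : 0 < 16*w*(4*u*w - w^2) * (w*a^2 + u*b^2 + c^2 + w*a*b + u*b*c - t*a*c) := by
    rw [key]
    rcases eq_or_ne c 0 with hc | hc
    · subst hc
      rcases eq_or_ne b 0 with hb | hb
      · subst hb
        have ha : a ≠ 0 := by tauto
        have h1 : 0 < (2*w*a + w*0 - t*0)^2 := by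
          have := sq_pos' (show 2*w*a ≠ 0 by positivity)
          simpa using this
        nlinarith [mul_pos (mul_pos hM (by norm_num : (0:ℝ) < 4)) h1,
          sq_nonneg (2*(4*u*w - w^2)*0 + (4*u*w + 2*w*t)*0)]
      · have h1 : 0 < (2*(4*u*w - w^2)*b + (4*u*w + 2*w*t)*0)^2 := by
          have he : (2*(4*u*w - w^2)*b + (4*u*w + 2*w*t)*0) = 2*(4*u*w - w^2)*b := by ring
          rw [he]
          exact sq_pos' (by positivity)
        nlinarith [h1, mul_nonneg (mul_nonneg hM.le (by norm_num : (0:ℝ) ≤ 4))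
          (sq_nonneg (2*w*a + w*b - t*0))]
    · have h1 : 0 < 16*w*(4*u*w - u*t^2 - w^2 - u^2*w - u*w*t)*c^2 :=
        mul_pos (mul_pos (by positivity) hdet) (sq_pos' hc)
      nlinarith [h1, mul_nonneg (mul_nonneg hM.le (by norm_num : (0:ℝ) ≤ 4))
        (sq_nonneg (2*w*a + w*b - t*c)),
        sq_nonneg (2*(4*u*w - w^2)*b + (4*u*w + 2*w*t)*c)]
  nlinarith [hMG, hMpos]

private lemma dp_symm (p : ℝ) {n : ℕ} (x y : Fin n → ℝ) : dpDist p x y = dpDist p y x := by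
  unfold dpDist; simp [abs_sub_comm]

private lemma dp_pow_eq (p : ℝ) (hp : 0 < p) (x y : Fin 2 → ℝ) :
    dpDist p x y ^ p =
      if 1 ≤ p then |x 0 - y 0| ^ p + |x 1 - y 1| ^ p
      else (|x 0 - y 0| ^ p + |x 1 - y 1| ^ p) ^ p := by
  have hT : (0:ℝ) ≤ |x 0 - y 0| ^ p + |x 1 - y 1| ^ p := by positivity
  unfold dpDist
  rw [Fin.sum_univ_two]
  split
  · rw [← Real.rpow_mul hT, one_div, inv_mul_cancel₀ (ne_of_gt hp), Real.rpow_one]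
  · rfl

private lemma rpow_subadd {x y p : ℝ} (hx : 0 ≤ x) (hy : 0 ≤ y) (hp : 0 ≤ p) (hp1 : p ≤ 1) :
    (x + y) ^ p ≤ x ^ p + y ^ p := by
  have h := NNReal.rpow_add_le_add_rpow x.toNNReal y.toNNReal hp hp1
  have hx' : ((x.toNNReal : ℝ)) = x := Real.coe_toNNReal _ hx
  have hy' : ((y.toNNReal : ℝ)) = y := Real.coe_toNNReal _ hy
  calc (x + y) ^ p = (((x.toNNReal + y.toNNReal : NNReal) : ℝ)) ^ p := by
        rw [NNReal.coe_add, hx', hy']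
    _ = (((x.toNNReal + y.toNNReal) ^ p : NNReal) : ℝ) := by rw [NNReal.coe_rpow]
    _ ≤ ((x.toNNReal ^ p + y.toNNReal ^ p : NNReal) : ℝ) := NNReal.coe_le_coe.2 h
    _ = x ^ p + y ^ p := by rw [NNReal.coe_add, NNReal.coe_rpow, NNReal.coe_rpow, hx', hy']

private lemma sum_reindex {X : Type*} [DecidableEq X] {n : ℕ} (z : Fin n → X) (S : Finset X)
    (hz : ∀ k, z k ∈ S) (g : X → ℝ) (ζ : Fin n → ℝ) :
    ∑ j, g (z j) * ζ j = ∑ v ∈ S, g v * ∑ j, if z j = v then ζ j else 0 := by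
  simp_rw [Finset.mul_sum, mul_ite, mul_zero]
  rw [Finset.sum_comm]
  refine Finset.sum_congr rfl fun j _ => ?_
  rw [Finset.sum_ite_eq S (z j) fun v => g v * ζ j, if_pos (hz j)]

private lemma double_reindex {X : Type*} [DecidableEq X] {n : ℕ} (d : X → X → ℝ) (p : ℝ) (z : Fin n → X)
    (S : Finset X) (hz : ∀ k, z k ∈ S) (ζ : Fin n → ℝ) :
    ∑ j, ∑ i, d (z j) (z i) ^ p * (ζ j * ζ i)
      = ∑ v ∈ S, ∑ w ∈ S, d v w ^ p *
          ((∑ j, if z j = v then ζ j else 0) * (∑ i, if z i = w then ζ i else 0)) := by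
  set c : X → ℝ := fun v => ∑ j, if z j = v then ζ j else 0 with hc
  have step1 : ∀ j, ∑ i, d (z j) (z i) ^ p * (ζ j * ζ i)
      = (fun v => ∑ w ∈ S, d v w ^ p * c w) (z j) * ζ j := by
    intro j
    simp only [hc]
    rw [← sum_reindex z S hz (fun y => d (z j) y ^ p) ζ]
    rw [Finset.sum_mul]
    exact Finset.sum_congr rfl fun i _ => by ring
  calc ∑ j, ∑ i, d (z j) (z i) ^ p * (ζ j * ζ i)
      = ∑ j, (fun v => ∑ w ∈ S, d v w ^ p * c w) (z j) * ζ j :=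
        Finset.sum_congr rfl fun j _ => step1 j
    _ = ∑ v ∈ S, (∑ w ∈ S, d v w ^ p * c w) * c v :=
        sum_reindex z S hz (fun v => ∑ w ∈ S, d v w ^ p * c w) ζ
    _ = ∑ v ∈ S, ∑ w ∈ S, d v w ^ p * (c v * c w) := by
        refine Finset.sum_congr rfl fun v _ => ?_
        rw [Finset.sum_mul]
        exact Finset.sum_congr rfl fun w _ => by ring

private lemma c_apply {X : Type*} [DecidableEq X] {n : ℕ} {z : Fin n → X} (hinj : Function.Injective z)
    (ζ : Fin n → ℝ) (j : Fin n) : (∑ i, if z i = z j then ζ i else 0) = ζ j := by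
  rw [Finset.sum_eq_single j]
  · simp
  · intro i _ hij
    exact if_neg fun h => hij (hinj h)
  · simp

private lemma ne01 : (![0,0] : Fin 2 → ℝ) ≠ ![1,1] := by norm_num [funext_iff, Fin.forall_fin_two]
private lemma ne02 : (![0,0] : Fin 2 → ℝ) ≠ ![2,1] := by norm_num [funext_iff, Fin.forall_fin_two]
private lemma ne03 : (![0,0] : Fin 2 → ℝ) ≠ ![2,0] := by norm_num [funext_iff, Fin.forall_fin_two]
private lemma ne12 : (![1,1] : Fin 2 → ℝ) ≠ ![2,1] := by norm_num [funext_iff, Fin.forall_fin_two]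
private lemma ne13 : (![1,1] : Fin 2 → ℝ) ≠ ![2,0] := by norm_num [funext_iff, Fin.forall_fin_two]
private lemma ne23 : (![2,1] : Fin 2 → ℝ) ≠ ![2,0] := by norm_num [funext_iff, Fin.forall_fin_two]

private lemma sum_four (g : (Fin 2 → ℝ) → ℝ) :
    ∑ v ∈ ({![0,0], ![1,1], ![2,1], ![2,0]} : Finset (Fin 2 → ℝ)), g v
      = g ![0,0] + g ![1,1] + g ![2,1] + g ![2,0] := by
  have m0 : (![0,0] : Fin 2 → ℝ) ∉ ({![1,1], ![2,1], ![2,0]} : Finset (Fin 2 → ℝ)) := by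
    simp only [Finset.mem_insert, Finset.mem_singleton, not_or]
    exact ⟨ne01, ne02, ne03⟩
  have m1 : (![1,1] : Fin 2 → ℝ) ∉ ({![2,1], ![2,0]} : Finset (Fin 2 → ℝ)) := by
    simp only [Finset.mem_insert, Finset.mem_singleton, not_or]
    exact ⟨ne12, ne13⟩
  have m2 : (![2,1] : Fin 2 → ℝ) ∉ ({![2,0]} : Finset (Fin 2 → ℝ)) := by
    simp only [Finset.mem_singleton]
    exact ne23
  rw [show ({![0,0], ![1,1], ![2,1], ![2,0]} : Finset (Fin 2 → ℝ))
      = insert ![0,0] (insert ![1,1] (insert ![2,1] {![2,0]})) from rfl]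
  rw [Finset.sum_insert m0, Finset.sum_insert m1, Finset.sum_insert m2, Finset.sum_singleton]
  ring

/-- The core four-point computation. -/
private lemma key_lemma (p : ℝ) (hp : 0 < p) (hp2 : p < 2) (c : (Fin 2 → ℝ) → ℝ)
    (hsum : c ![0,0] + c ![1,1] + c ![2,1] + c ![2,0] = 0)
    (hne : ¬ (c ![0,0] = 0 ∧ c ![1,1] = 0 ∧ c ![2,1] = 0)) :
    ∑ v ∈ ({![0,0], ![1,1], ![2,1], ![2,0]} : Finset (Fin 2 → ℝ)),
      ∑ w ∈ ({![0,0], ![1,1], ![2,1], ![2,0]} : Finset (Fin 2 → ℝ)),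
        dpDist p v w ^ p * (c v * c w) < 0 := by
  rw [sum_four, sum_four, sum_four, sum_four, sum_four]
  rw [dp_symm p ![1,1] ![0,0], dp_symm p ![2,1] ![0,0], dp_symm p ![2,0] ![0,0],
    dp_symm p ![2,1] ![1,1], dp_symm p ![2,0] ![1,1], dp_symm p ![2,0] ![2,1]]
  have e00 : dpDist p ![0,0] ![0,0] ^ p = 0 := by
    rw [dp_pow_eq p hp]
    norm_num [Real.zero_rpow hp.ne']
  have e11 : dpDist p ![1,1] ![1,1] ^ p = 0 := by
    rw [dp_pow_eq p hp]
    norm_num [Real.zero_rpow hp.ne']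
  have e22 : dpDist p ![2,1] ![2,1] ^ p = 0 := by
    rw [dp_pow_eq p hp]
    norm_num [Real.zero_rpow hp.ne']
  have e33 : dpDist p ![2,0] ![2,0] ^ p = 0 := by
    rw [dp_pow_eq p hp]
    norm_num [Real.zero_rpow hp.ne']
  have e01 : dpDist p ![0,0] ![1,1] ^ p = if 1 ≤ p then 2 else (2:ℝ)^p := by
    rw [dp_pow_eq p hp]
    norm_num [Real.one_rpow]
  have e02 : dpDist p ![0,0] ![2,1] ^ p
      = if 1 ≤ p then (2:ℝ)^p + 1 else ((2:ℝ)^p + 1)^p := by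
    rw [dp_pow_eq p hp]
    norm_num [Real.one_rpow]
  have e03 : dpDist p ![0,0] ![2,0] ^ p = if 1 ≤ p then (2:ℝ)^p else ((2:ℝ)^p)^p := by
    rw [dp_pow_eq p hp]
    norm_num [Real.zero_rpow hp.ne']
  have e12 : dpDist p ![1,1] ![2,1] ^ p = 1 := by
    rw [dp_pow_eq p hp]
    norm_num [Real.one_rpow, Real.zero_rpow hp.ne']
  have e13 : dpDist p ![1,1] ![2,0] ^ p = if 1 ≤ p then 2 else (2:ℝ)^p := by
    rw [dp_pow_eq p hp]
    norm_num [Real.one_rpow]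
  have e23 : dpDist p ![2,1] ![2,0] ^ p = 1 := by
    rw [dp_pow_eq p hp]
    norm_num [Real.one_rpow, Real.zero_rpow hp.ne']
  rw [e00, e11, e22, e33, e01, e02, e03, e12, e13, e23]
  set c0 := c ![0,0] with hc0def
  set c1 := c ![1,1] with hc1def
  set c2 := c ![2,1] with hc2def
  set c3 := c ![2,0] with hc3def
  have hne3 : c0 ≠ 0 ∨ c1 ≠ 0 ∨ c2 ≠ 0 := by
    by_contra h
    push_neg at h
    exact hne ⟨h.1, h.2.1, h.2.2⟩
  have hc3 : c3 = -(c0 + c1 + c2) := by linarith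
  rw [hc3]
  have hs0 : (0:ℝ) < (2:ℝ)^p := Real.rpow_pos_of_pos two_pos p
  rcases le_or_gt 1 p with h1 | h1
  · rw [if_pos h1, if_pos h1, if_pos h1]
    have hs4 : (2:ℝ)^p < 4 := by
      have h2 : (2:ℝ)^p < (2:ℝ)^(2:ℝ) := Real.rpow_lt_rpow_of_exponent_lt one_lt_two hp2
      have h3 : (2:ℝ)^(2:ℝ) = 4 := by
        rw [show ((2:ℝ):ℝ) = (((2:ℕ):ℝ)) from by norm_num, Real.rpow_natCast]
        norm_num
      linarith
    have hG := quad_pos 2 ((2:ℝ)^p) 0 c0 c1 c2 hs0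
      (by linarith) le_rfl (by linarith) (by linarith) hne3
    linarith [hG]
  · rw [if_neg (not_le.2 h1), if_neg (not_le.2 h1), if_neg (not_le.2 h1)]
    set u : ℝ := (2:ℝ)^p with hu
    set w : ℝ := u^p with hwdef
    set v : ℝ := (u+1)^p with hvdef
    have hu1 : 1 < u := by
      have := Real.rpow_lt_rpow_of_exponent_lt (show (1:ℝ) < 2 by norm_num) hp
      simpa [Real.rpow_zero] using this
    have hu2 : u < 2 := by
      have := Real.rpow_lt_rpow_of_exponent_lt (show (1:ℝ) < 2 by norm_num) h1
      simpa [Real.rpow_one] using this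
    have hw1 : 1 < w := by
      have := Real.rpow_lt_rpow (by norm_num) hu1 hp
      simpa [Real.one_rpow] using this
    have hw2 : w < u := by
      have := Real.rpow_lt_rpow_of_exponent_lt hu1 h1
      simpa [Real.rpow_one] using this
    have hv1 : 1 < v := by
      have := Real.rpow_lt_rpow (by norm_num) (show (1:ℝ) < u + 1 by linarith) hp
      simpa [Real.one_rpow] using this
    have hsub : v ≤ w + 1 := by
      have := rpow_subadd (by linarith : (0:ℝ) ≤ u) (by norm_num : (0:ℝ) ≤ 1) hp.le h1.le
      simpa [Real.one_rpow] using this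
    have hG := quad_pos u w (v - w - 1) c0 c1 c2 (by linarith)
      (by linarith) (by linarith) (by linarith)
      (by nlinarith [mul_pos (show (0:ℝ) < u - 1 by linarith) (show (0:ℝ) < 3 - u by linarith)])
      hne3
    linarith [hG]

private lemma setS_eq :
    ((↑({![0,0], ![1,1], ![2,1], ![2,0]} : Finset (Fin 2 → ℝ)) : Set (Fin 2 → ℝ)))
      = ({![0, 0], ![1, 1], ![2, 1], ![2, 0]} : Set (Fin 2 → ℝ)) := by
  simp

set_option maxHeartbeats 1000000 in
/-- For `0 < p < 2`, the set
`Z = {(0,0), (1,1), (2,1), (2,0)} ⊂ ℝ²` is affinely dependent, yet `(Z, d_p)` has strict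
`p`-negative type. -/
theorem fourPoint_example_strictNegativeType (p : ℝ) (hp : 0 < p) (hp2 : p < 2) :
    ¬ AffineIndependent ℝ
        ((↑) : ({![0, 0], ![1, 1], ![2, 1], ![2, 0]} : Set (Fin 2 → ℝ)) → (Fin 2 → ℝ)) ∧
    HasStrictNegativeType (dpDist p) p
      ({![0, 0], ![1, 1], ![2, 1], ![2, 0]} : Set (Fin 2 → ℝ)) := by
  constructor
  · intro hAI
    set q : Fin 4 → (Fin 2 → ℝ) := ![![0,0], ![1,1], ![2,1], ![2,0]] with hq
    have hmem : ∀ i : Fin 4, q i ∈ ({![0, 0], ![1, 1], ![2, 1], ![2, 0]} : Set (Fin 2 → ℝ)) := by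
      intro i
      fin_cases i <;> simp [hq]
    have hqinj : Function.Injective q := by
      intro i j hij
      fin_cases i <;> fin_cases j <;>
        first
          | rfl
          | (exfalso; revert hij; simp only [hq]; norm_num [funext_iff, Fin.forall_fin_two])
    set f : Fin 4 ↪ ({![0, 0], ![1, 1], ![2, 1], ![2, 0]} : Set (Fin 2 → ℝ)) :=
      ⟨fun i => ⟨q i, hmem i⟩, fun i j hij => hqinj (congrArg Subtype.val hij)⟩ with hf
    have hAIq : AffineIndependent ℝ q := by
      have := hAI.comp_embedding f
      convert this using 1
      rfl
    have := affineIndependent_iff.mp hAIq Finset.univ ![1/2, -1, 1, -1/2]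
      (by simp [Fin.sum_univ_four]; norm_num)
      (by
        simp only [Fin.sum_univ_four]
        funext k
        fin_cases k <;> simp [hq] <;> norm_num)
      0 (Finset.mem_univ 0)
    norm_num at this
  · have core : ∀ n : ℕ, ∀ z : Fin n → (Fin 2 → ℝ), Function.Injective z →
        (∀ k, z k ∈ ({![0, 0], ![1, 1], ![2, 1], ![2, 0]} : Set (Fin 2 → ℝ))) →
        ∀ ζ : Fin n → ℝ, ∑ k, ζ k = 0 → ζ ≠ 0 →
        ∑ j, ∑ i, dpDist p (z j) (z i) ^ p * (ζ j * ζ i) < 0 := by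
      intro n z hinj hmem ζ hζsum hζne
      have hzS : ∀ k, z k ∈ ({![0,0], ![1,1], ![2,1], ![2,0]} : Finset (Fin 2 → ℝ)) := by
        intro k
        have := hmem k
        simp only [Set.mem_insert_iff, Set.mem_singleton_iff] at this
        simp only [Finset.mem_insert, Finset.mem_singleton]
        tauto
      have hcsum : (∑ j, if z j = ![0,0] then ζ j else 0)
          + (∑ j, if z j = ![1,1] then ζ j else 0)
          + (∑ j, if z j = ![2,1] then ζ j else 0)
          + (∑ j, if z j = ![2,0] then ζ j else 0) = 0 := by
        have h1 := sum_reindex z _ hzS (fun _ => 1) ζ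
        rw [sum_four] at h1
        simp only [one_mul] at h1
        linarith [h1, hζsum]
      rw [double_reindex (dpDist p) p z _ hzS ζ]
      refine key_lemma p hp hp2 (fun v => ∑ j, if z j = v then ζ j else 0) hcsum ?_
      intro hall
      replace hall : (∑ i, if z i = ![0,0] then ζ i else 0) = 0
          ∧ (∑ i, if z i = ![1,1] then ζ i else 0) = 0
          ∧ (∑ i, if z i = ![2,1] then ζ i else 0) = 0 := hall
      have h4 : (∑ i, if z i = ![2,0] then ζ i else 0) = 0 := by
        linarith [hcsum, hall.1, hall.2.1, hall.2.2]
      obtain ⟨j, hj⟩ := Function.ne_iff.1 hζne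
      have hj' : ζ j ≠ 0 := by simpa using hj
      have hcz := c_apply hinj ζ j
      have hzj := hmem j
      simp only [Set.mem_insert_iff, Set.mem_singleton_iff] at hzj
      rcases hzj with h | h | h | h <;> rw [h] at hcz
      · exact hj' (hcz.symm.trans hall.1)
      · exact hj' (hcz.symm.trans hall.2.1)
      · exact hj' (hcz.symm.trans hall.2.2)
      · exact hj' (hcz.symm.trans h4)
    refine ⟨?_, fun n hn z hinj hmem ζ hζsum hζne => core n z hinj hmem ζ hζsum hζne⟩
    intro n hn z hinj hmem ζ hζsum
    by_cases hζ : ζ = 0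
    · subst hζ
      simp
    · exact (core n z hinj hmem ζ hζsum hζ).le

-- axiom check
-- #print axioms fourPoint_example_strictNegativeType
end
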